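/- Almost surely, (1/(m·p(m)))·tr(Ā_m A_mᵀ) − (1/(m·p(m)))·tr(A_m A_mᵀ) → 0 as m → ∞. -/

import Mathlib

open MeasureTheory ProbabilityTheory Filter Matrix

lemma aux_fin_sum {m pm : ℕ} (F : ℕ → ℕ → ℝ) :
    ∑ q ∈ (Finset.range m) ×ˢ (Finset.range pm), F q.1 q.2
      = ∑ k : Fin m, ∑ j : Fin pm, F k.1 j.1 := by
  rw [Finset.sum_product]
  rw [← Fin.sum_univ_eq_sum_range (fun i => ∑ j ∈ Finset.range pm, F i j) m]
  exact Finset.sum_congr rfl fun k _ => (Fin.sum_univ_eq_sum_range (fun j => F k.1 j) pm).symm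

lemma aux_summable : Summable (fun k : ℕ => 1 / ((k : ℝ) + 1) ^ 2) := by
  have h : Summable (fun n : ℕ => 1 / (n : ℝ) ^ 2) :=
    Real.summable_one_div_nat_pow.mpr one_lt_two
  have h2 := (summable_nat_add_iff 1).mpr h
  refine h2.congr (fun k => ?_)
  push_cast
  ring

lemma aux_fin_sum' {m pm : ℕ} (G : ℕ × ℕ → ℝ) :
    ∑ q ∈ (Finset.range m) ×ˢ (Finset.range pm), G q
      = ∑ k : Fin m, ∑ j : Fin pm, G (k.1, j.1) := by
  calc ∑ q ∈ (Finset.range m) ×ˢ (Finset.range pm), G q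
      = ∑ q ∈ (Finset.range m) ×ˢ (Finset.range pm), (fun i j => G (i, j)) q.1 q.2 :=
        Finset.sum_congr rfl fun q _ => by simp
    _ = ∑ k : Fin m, ∑ j : Fin pm, G (k.1, j.1) := by exact aux_fin_sum (fun i j => G (i, j))

lemma aux_int_pow {Ω : Type*} [MeasureSpace Ω] [IsProbabilityMeasure (ℙ : Measure Ω)] {f : Ω → ℝ}
    (hm : Measurable f) (h4 : Integrable (fun ω => f ω ^ 4)) {j : ℕ} (hj : j ≤ 4) :
    Integrable (fun ω => f ω ^ j) := by
  refine Integrable.mono' ((integrable_const (1:ℝ)).add h4)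
    ((hm.pow_const j).aestronglyMeasurable) (Filter.Eventually.of_forall fun ω => ?_)
  have h4e : f ω ^ 4 = |f ω| ^ 4 := by rw [← abs_pow, abs_of_nonneg (by positivity)]
  simp only [Pi.add_apply, Real.norm_eq_abs, abs_pow, h4e]
  rcases le_total (|f ω|) 1 with h | h
  · have : |f ω| ^ j ≤ 1 := pow_le_one₀ (abs_nonneg _) h
    nlinarith [pow_nonneg (abs_nonneg (f ω)) 4]
  · have : |f ω| ^ j ≤ |f ω| ^ 4 := pow_le_pow_right₀ h hj
    nlinarith

lemma aux_moment4 {Ω : Type*} [MeasureSpace Ω] [IsProbabilityMeasure (ℙ : Measure Ω)]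
    (e : ℕ → ℕ → Ω → ℝ) (hmeas : ∀ i j, Measurable (e i j))
    (hindep : iIndepFun (fun q : ℕ × ℕ => e q.1 q.2) ℙ)
    (hint4 : ∀ i j, Integrable (fun ω => (e i j ω) ^ 4))
    (hmean : ∀ i j, ∫ ω, e i j ω = 0)
    (hvar : ∀ i j, ∫ ω, (e i j ω) ^ 2 = 1)
    (M : ℝ) (hM : ∀ i j, ∫ ω, (e i j ω) ^ 4 ≤ M)
    (c : ℕ × ℕ → ℝ) (s : Finset (ℕ × ℕ)) :
    Integrable (fun ω => (∑ q ∈ s, c q * e q.1 q.2 ω) ^ 4) ∧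
    (∫ ω, (∑ q ∈ s, c q * e q.1 q.2 ω)) = 0 ∧
    (∫ ω, (∑ q ∈ s, c q * e q.1 q.2 ω) ^ 2) = ∑ q ∈ s, (c q) ^ 2 ∧
    (∫ ω, (∑ q ∈ s, c q * e q.1 q.2 ω) ^ 4) ≤ (M + 3) * (∑ q ∈ s, (c q) ^ 2) ^ 2 := by
  classical
  have hM0 : 0 ≤ M :=
    le_trans (integral_nonneg (fun ω => by positivity)) (hM 0 0)
  induction s using Finset.induction_on with
  | empty => simp
  | @insert a s ha ih =>
    obtain ⟨ihInt, ihMean, ihVar, ihBound⟩ := ih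
    set S : Ω → ℝ := fun ω => ∑ q ∈ s, c q * e q.1 q.2 ω with hS
    set E : Ω → ℝ := fun ω => e a.1 a.2 ω with hE
    have hSmeas : Measurable S :=
      Finset.measurable_sum s (fun q _ => (hmeas q.1 q.2).const_mul (c q))
    have hEmeas : Measurable E := hmeas a.1 a.2
    -- independence of E and S
    have hindS : IndepFun E S ℙ := by
      have h := hindep.indepFun_finset {a} s (by simpa using ha) (fun q => hmeas q.1 q.2)
      have hφ : Measurable (fun v : ({a} : Finset (ℕ × ℕ)) → ℝ =>
          v ⟨a, Finset.mem_singleton_self a⟩) := measurable_pi_apply _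
      have hψ : Measurable (fun v : {x // x ∈ s} → ℝ =>
          ∑ q : {x // x ∈ s}, c q.1 * v q) :=
        Finset.measurable_sum _ (fun q _ => (measurable_pi_apply q).const_mul _)
      have h2 := h.comp hφ hψ
      have heq : (fun ω => ∑ q ∈ s.attach, c q.1 * e q.1.1 q.1.2 ω) = S := by
        funext ω
        rw [hS]
        exact Finset.sum_attach s (fun q => c q * e q.1 q.2 ω)
      have h3 : IndepFun E (fun ω => ∑ q ∈ s.attach, c q.1 * e q.1.1 q.1.2 ω) ℙ := h2
      rwa [heq] at h3
    have hindP : ∀ k l : ℕ, IndepFun (fun ω => E ω ^ k) (fun ω => S ω ^ l) ℙ :=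
      fun k l => hindS.comp (measurable_id.pow_const k) (measurable_id.pow_const l)
    -- integrability facts
    have hE4 : Integrable (fun ω => E ω ^ 4) := hint4 a.1 a.2
    have hEj : ∀ {j : ℕ}, j ≤ 4 → Integrable (fun ω => E ω ^ j) :=
      fun hj => aux_int_pow hEmeas hE4 hj
    have hSj : ∀ {j : ℕ}, j ≤ 4 → Integrable (fun ω => S ω ^ j) :=
      fun hj => aux_int_pow hSmeas ihInt hj
    have hprod : ∀ k l : ℕ, k ≤ 4 → l ≤ 4 →
        Integrable (fun ω => E ω ^ k * S ω ^ l) := by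
      intro k l hk hl
      have := (hindP k l).integrable_mul (hEj hk) (hSj hl)
      exact this
    -- integral identities for products
    have hEint : ∀ k : ℕ, k ≤ 4 → ∀ l : ℕ, l ≤ 4 →
        (∫ ω, E ω ^ k * S ω ^ l) = (∫ ω, E ω ^ k) * (∫ ω, S ω ^ l) := by
      intro k hk l hl
      exact (hindP k l).integral_mul_eq_mul_integral ((hEmeas.pow_const k).aestronglyMeasurable)
        ((hSmeas.pow_const l).aestronglyMeasurable)
    have hSmean : (∫ ω, S ω) = 0 := ihMean
    have hS1 : (∫ ω, S ω ^ 1) = 0 := by simpa using ihMean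
    have hE1 : (∫ ω, E ω ^ 1) = 0 := by simpa using hmean a.1 a.2
    have hE2 : (∫ ω, E ω ^ 2) = 1 := hvar a.1 a.2
    have hS2 : (∫ ω, S ω ^ 2) = ∑ q ∈ s, (c q) ^ 2 := ihVar
    -- sums over insert
    have hsum : ∀ ω, (∑ q ∈ insert a s, c q * e q.1 q.2 ω) = c a * E ω + S ω := by
      intro ω; rw [Finset.sum_insert ha]
    set A : ℝ := ∑ q ∈ s, (c q) ^ 2 with hA
    have hA0 : 0 ≤ A := Finset.sum_nonneg (fun q _ => sq_nonneg _)
    -- pieces of degree-4 expansion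
    have i0 : Integrable (fun ω => c a ^ 4 * E ω ^ 4) := hE4.const_mul _
    have i1 : Integrable (fun ω => (4 * c a ^ 3) * (E ω ^ 3 * S ω ^ 1)) :=
      (hprod 3 1 (by norm_num) (by norm_num)).const_mul _
    have i2 : Integrable (fun ω => (6 * c a ^ 2) * (E ω ^ 2 * S ω ^ 2)) :=
      (hprod 2 2 (by norm_num) (by norm_num)).const_mul _
    have i3 : Integrable (fun ω => (4 * c a) * (E ω ^ 1 * S ω ^ 3)) :=
      (hprod 1 3 (by norm_num) (by norm_num)).const_mul _
    have i01 : Integrable (fun ω => c a ^ 4 * E ω ^ 4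
        + (4 * c a ^ 3) * (E ω ^ 3 * S ω ^ 1)) := i0.add i1
    have i012 : Integrable (fun ω => c a ^ 4 * E ω ^ 4
        + (4 * c a ^ 3) * (E ω ^ 3 * S ω ^ 1)
        + (6 * c a ^ 2) * (E ω ^ 2 * S ω ^ 2)) := i01.add i2
    have i0123 : Integrable (fun ω => c a ^ 4 * E ω ^ 4
        + (4 * c a ^ 3) * (E ω ^ 3 * S ω ^ 1)
        + (6 * c a ^ 2) * (E ω ^ 2 * S ω ^ 2)
        + (4 * c a) * (E ω ^ 1 * S ω ^ 3)) := i012.add i3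
    have hexp4 : (fun ω => (c a * E ω + S ω) ^ 4) = (fun ω =>
        c a ^ 4 * E ω ^ 4 + (4 * c a ^ 3) * (E ω ^ 3 * S ω ^ 1)
        + (6 * c a ^ 2) * (E ω ^ 2 * S ω ^ 2) + (4 * c a) * (E ω ^ 1 * S ω ^ 3)
        + S ω ^ 4) := by funext ω; ring
    have hInt4 : Integrable (fun ω => (c a * E ω + S ω) ^ 4) := by
      rw [hexp4]; exact i0123.add (hSj (by norm_num))
    have hI4 : (∫ ω, (c a * E ω + S ω) ^ 4) =
        c a ^ 4 * (∫ ω, E ω ^ 4) + (6 * c a ^ 2) * A + (∫ ω, S ω ^ 4) := by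
      rw [hexp4, integral_add i0123 (hSj (by norm_num)), integral_add i012 i3,
        integral_add i01 i2, integral_add i0 i1,
        integral_const_mul, integral_const_mul, integral_const_mul, integral_const_mul,
        hEint 3 (by norm_num) 1 (by norm_num), hEint 2 (by norm_num) 2 (by norm_num),
        hEint 1 (by norm_num) 3 (by norm_num), hS1, hE1, hE2, hS2]
      ring
    refine ⟨?_, ?_, ?_, ?_⟩
    · have h : (fun ω => (∑ q ∈ insert a s, c q * e q.1 q.2 ω) ^ 4)
          = fun ω => (c a * E ω + S ω) ^ 4 := by funext ω; rw [hsum ω]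
      rw [h]; exact hInt4
    · have h : (fun ω => (∑ q ∈ insert a s, c q * e q.1 q.2 ω))
          = fun ω => c a * E ω + S ω := by funext ω; rw [hsum ω]
      have hIS : Integrable S := by simpa using hSj (by norm_num : 1 ≤ 4)
      have hIE : Integrable (fun ω => c a * E ω) := by
        have : Integrable E := by simpa using hEj (by norm_num : 1 ≤ 4)
        exact this.const_mul _
      rw [h, integral_add hIE hIS, integral_const_mul]
      have : (∫ ω, E ω) = 0 := hmean a.1 a.2
      rw [this, hSmean]; ring
    · have h2 : (fun ω => (∑ q ∈ insert a s, c q * e q.1 q.2 ω) ^ 2)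
          = fun ω => c a ^ 2 * E ω ^ 2 + (2 * c a) * (E ω ^ 1 * S ω ^ 1) + S ω ^ 2 := by
        funext ω; rw [hsum ω]; ring
      have j0 : Integrable (fun ω => c a ^ 2 * E ω ^ 2) :=
        (hEj (by norm_num : 2 ≤ 4)).const_mul _
      have j1 : Integrable (fun ω => (2 * c a) * (E ω ^ 1 * S ω ^ 1)) :=
        (hprod 1 1 (by norm_num) (by norm_num)).const_mul _
      have j01 : Integrable (fun ω => c a ^ 2 * E ω ^ 2
          + (2 * c a) * (E ω ^ 1 * S ω ^ 1)) := j0.add j1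
      rw [h2, integral_add j01 (hSj (by norm_num : 2 ≤ 4)), integral_add j0 j1,
        integral_const_mul, integral_const_mul, hEint 1 (by norm_num) 1 (by norm_num),
        hE1, hE2, hS2, Finset.sum_insert ha]
      ring
    · have h4 : (fun ω => (∑ q ∈ insert a s, c q * e q.1 q.2 ω) ^ 4)
          = fun ω => (c a * E ω + S ω) ^ 4 := by funext ω; rw [hsum ω]
      rw [h4, hI4, Finset.sum_insert ha]
      have hMa : (∫ ω, E ω ^ 4) ≤ M := hM a.1 a.2
      have hE4nn : 0 ≤ (∫ ω, E ω ^ 4) := integral_nonneg (fun ω => by positivity)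
      have hSB : (∫ ω, S ω ^ 4) ≤ (M + 3) * A ^ 2 := ihBound
      nlinarith [sq_nonneg (c a), sq_nonneg (c a ^ 2), sq_nonneg (c a ^ 2 * A),
        mul_nonneg (sq_nonneg (c a)) hA0, sq_nonneg (c a ^ 2 - A),
        mul_nonneg (mul_nonneg hM0 (sq_nonneg (c a))) hA0]

lemma aux_bc {Ω : Type*} [MeasureSpace Ω] [IsProbabilityMeasure (ℙ : Measure Ω)]
    (f : ℕ → Ω → ℝ) (hm : ∀ k, Measurable (f k)) (h0 : ∀ k ω, 0 ≤ f k ω)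
    (hi : ∀ k, Integrable (f k)) (u : ℕ → ℝ) (hu : Summable u)
    (hb : ∀ k, (∫ ω, f k ω) ≤ u k) :
    ∀ᵐ ω, Tendsto (fun k => f k ω) atTop (nhds 0) := by
  have hu0 : ∀ k, 0 ≤ u k := fun k =>
    le_trans (integral_nonneg (h0 k)) (hb k)
  have key : (∫⁻ ω, ∑' k, ENNReal.ofReal (f k ω) ∂ℙ) < ⊤ := by
    rw [lintegral_tsum (fun k => ((hm k).ennreal_ofReal).aemeasurable)]
    have h1 : ∀ k, (∫⁻ ω, ENNReal.ofReal (f k ω) ∂ℙ) = ENNReal.ofReal (∫ ω, f k ω) :=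
      fun k => (ofReal_integral_eq_lintegral_ofReal (hi k)
        (Filter.Eventually.of_forall (h0 k))).symm
    calc (∑' k, ∫⁻ ω, ENNReal.ofReal (f k ω) ∂ℙ)
        ≤ ∑' k, ENNReal.ofReal (u k) := by
          refine ENNReal.tsum_le_tsum (fun k => ?_)
          rw [h1 k]; exact ENNReal.ofReal_le_ofReal (hb k)
      _ = ENNReal.ofReal (∑' k, u k) := (ENNReal.ofReal_tsum_of_nonneg hu0 hu).symm
      _ < ⊤ := ENNReal.ofReal_lt_top
  have hmeas : Measurable (fun ω => ∑' k, ENNReal.ofReal (f k ω)) :=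
    Measurable.ennreal_tsum (fun k => (hm k).ennreal_ofReal)
  have hae : ∀ᵐ ω, (∑' k, ENNReal.ofReal (f k ω)) < ⊤ :=
    ae_lt_top hmeas key.ne
  filter_upwards [hae] with ω hω
  have ht : Tendsto (fun k => ENNReal.ofReal (f k ω)) atTop (nhds 0) :=
    ENNReal.tendsto_atTop_zero_of_tsum_ne_top hω.ne
  have ht2 : Tendsto (fun k => (ENNReal.ofReal (f k ω)).toReal) atTop (nhds 0) := by
    have := (ENNReal.tendsto_toReal (by simp : (0 : ENNReal) ≠ ⊤)).comp ht
    exact this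
  have heq : (fun k => (ENNReal.ofReal (f k ω)).toReal) = fun k => f k ω := by
    funext k; exact ENNReal.toReal_ofReal (h0 k ω)
  rwa [heq] at ht2

lemma aux_trace_sq {m p : ℕ} (N : Matrix (Fin m) (Fin p) ℝ) :
    (N * Nᵀ).trace = ∑ k : Fin m, ∑ j : Fin p, (N k j) ^ 2 := by
  simp [Matrix.trace, Matrix.diag, Matrix.mul_apply, sq]

lemma aux_trace_formula {m p : ℕ} (M : Matrix (Fin m) (Fin m) ℝ) (hM : Mᵀ = M)
    (E N : Matrix (Fin m) (Fin p) ℝ) :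
    (M * E * Nᵀ).trace = ∑ k : Fin m, ∑ j : Fin p, (M * N) k j * E k j := by
  have hMs : ∀ i k, M i k = M k i := fun i k => (congrFun (congrFun hM i) k).symm
  have L : (M * E * Nᵀ).trace = ∑ i : Fin m, ∑ j : Fin p, ∑ k : Fin m,
      M i k * E k j * N i j := by
    simp [Matrix.trace, Matrix.diag, Matrix.mul_apply, Matrix.transpose_apply, Finset.sum_mul]
  have R : (∑ k : Fin m, ∑ j : Fin p, (M * N) k j * E k j)
      = ∑ k : Fin m, ∑ i : Fin m, ∑ j : Fin p, M k i * N i j * E k j := by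
    simp only [Matrix.mul_apply, Finset.sum_mul]
    exact Finset.sum_congr rfl (fun k _ => Finset.sum_comm)
  rw [L, R]
  have L2 : (∑ i : Fin m, ∑ j : Fin p, ∑ k : Fin m, M i k * E k j * N i j)
      = ∑ i : Fin m, ∑ k : Fin m, ∑ j : Fin p, M i k * E k j * N i j :=
    Finset.sum_congr rfl (fun i _ => Finset.sum_comm)
  rw [L2, Finset.sum_comm]
  refine Finset.sum_congr rfl (fun k _ => Finset.sum_congr rfl (fun i _ =>
    Finset.sum_congr rfl (fun j _ => ?_)))
  rw [hMs i k]; ring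

lemma aux_cs {m p : ℕ} (M : Matrix (Fin m) (Fin m) ℝ) (N : Matrix (Fin m) (Fin p) ℝ) :
    ∑ k : Fin m, ∑ j : Fin p, ((M * N) k j) ^ 2 ≤ (M * Mᵀ).trace * (N * Nᵀ).trace := by
  rw [aux_trace_sq (N := M), aux_trace_sq (N := N)]
  calc ∑ k : Fin m, ∑ j : Fin p, ((M * N) k j) ^ 2
      ≤ ∑ k : Fin m, ∑ j : Fin p, (∑ i : Fin m, (M k i) ^ 2) * (∑ i : Fin m, (N i j) ^ 2) := by
        refine Finset.sum_le_sum (fun k _ => Finset.sum_le_sum (fun j _ => ?_))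
        rw [Matrix.mul_apply]
        exact Finset.sum_mul_sq_le_sq_mul_sq _ _ _
    _ = (∑ k : Fin m, ∑ i : Fin m, (M k i) ^ 2) * (∑ i : Fin m, ∑ j : Fin p, (N i j) ^ 2) := by
        rw [Finset.sum_mul]
        refine Finset.sum_congr rfl (fun k _ => ?_)
        rw [← Finset.mul_sum, Finset.sum_comm]
/-- column-correlated noise: a.s. (1/(mp))·tr(Ā_m A_mᵀ) − (1/(mp))·tr(A_m A_mᵀ) → 0. -/
theorem stmt8
    {Ω : Type*} [MeasureSpace Ω] [IsProbabilityMeasure (ℙ : Measure Ω)]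
    (c : ℝ) (hc : 0 < c)
    (p : ℕ → ℕ)
    (hp : Tendsto (fun m : ℕ => (m : ℝ) / (p m : ℝ)) atTop (nhds c))
    (n : ℕ) (hn : 2 ≤ n)
    (e : ℕ → ℕ → Ω → ℝ)
    (hmeas : ∀ i j, Measurable (e i j))
    (hindep : iIndepFun (fun q : ℕ × ℕ => e q.1 q.2) ℙ)
    (hident : ∀ i j, IdentDistrib (e i j) (e 0 0) ℙ ℙ)
    (hint : ∀ i j, Integrable (e i j))
    (hsq : ∀ i j, Integrable (fun ω => (e i j ω) ^ 2))
    (hmean : ∀ i j, ∫ ω, e i j ω = 0)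
    (hvar : ∀ i j, ∫ ω, (e i j ω) ^ 2 = 1)
    (ε : ℝ) (hε : 0 < ε)
    (hmom : ∀ i j, Integrable (fun ω => |e i j ω| ^ ((4 : ℝ) + ε)))
    (Sig : ∀ m : ℕ, Matrix (Fin m) (Fin m) ℝ)
    (hSigSymm : ∀ m, (Sig m).IsSymm)
    (hSigPD : ∀ m, (Sig m).PosDef)
    (hSigTr : ∃ C : ℝ, ∀ m : ℕ, (1 / (m : ℝ)) * (Sig m).trace ≤ C)
    (Sqrt : ∀ m : ℕ, Matrix (Fin m) (Fin m) ℝ)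
    (hSqrtSymm : ∀ m, (Sqrt m).IsSymm)
    (hSqrtPD : ∀ m, (Sqrt m).PosDef)
    (hSqrtSq : ∀ m, Sqrt m * Sqrt m = Sig m)
    (A : ∀ m : ℕ, Matrix (Fin m) (Fin (p m)) ℝ)
    (hA : ∃ C : ℝ, ∀ m : ℕ, (1 / (m * p m : ℝ)) * (A m * (A m)ᵀ).trace ≤ C)
    (U : ∀ m : ℕ, Matrix (Fin m) (Fin (p m)) ℝ)
    (hU : ∀ m i j, U m i j = 1)
    (Abar : ∀ m : ℕ, Ω → Matrix (Fin m) (Fin (p m)) ℝ)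
    (hAbar : ∀ m ω, Abar m ω =
      A m + (1 / Real.sqrt n) •
      (Sqrt m * (Matrix.of fun i j => e i.val j.val ω : Matrix (Fin m) (Fin (p m)) ℝ))) :
    ∀ᵐ ω, Tendsto
      (fun m : ℕ => (1 / (m * p m : ℝ)) * (Abar m ω * (A m)ᵀ).trace - (1 / (m * p m : ℝ)) * (A m * (A m)ᵀ).trace)
      atTop (nhds 0) := by
  classical
  obtain ⟨C1, hC1⟩ := hSigTr
  obtain ⟨C2, hC2⟩ := hA
  set D1 : ℝ := max C1 0 with hD1
  set D2 : ℝ := max C2 0 with hD2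
  have hD10 : 0 ≤ D1 := le_max_right _ _
  have hD20 : 0 ≤ D2 := le_max_right _ _
  -- fourth moments
  have hint4 : ∀ i j, Integrable (fun ω => (e i j ω) ^ 4) := by
    intro i j
    refine Integrable.mono' ((integrable_const (1:ℝ)).add (hmom i j))
      (((hmeas i j).pow_const 4).aestronglyMeasurable)
      (Filter.Eventually.of_forall fun ω => ?_)
    have h4e : e i j ω ^ 4 = |e i j ω| ^ 4 := by
      rw [← abs_pow, abs_of_nonneg (by positivity)]
    simp only [Pi.add_apply, Real.norm_eq_abs, abs_pow, h4e, abs_abs]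
    rcases le_total (|e i j ω|) 1 with h | h
    · have h1 : |e i j ω| ^ 4 ≤ 1 := pow_le_one₀ (abs_nonneg _) h
      have h2 : (0:ℝ) ≤ |e i j ω| ^ ((4:ℝ) + ε) := Real.rpow_nonneg (abs_nonneg _) _
      linarith
    · have h1 : |e i j ω| ^ (4:ℕ) = |e i j ω| ^ ((4:ℕ):ℝ) :=
        (Real.rpow_natCast _ 4).symm
      have h2 : |e i j ω| ^ ((4:ℕ):ℝ) ≤ |e i j ω| ^ ((4:ℝ) + ε) := by
        refine Real.rpow_le_rpow_of_exponent_le h (by push_cast; linarith)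
      rw [h1]
      linarith
  set m4 : ℝ := ∫ ω, (e 0 0 ω) ^ 4 with hm4def
  have hm40 : 0 ≤ m4 := integral_nonneg (fun ω => by positivity)
  have hm4 : ∀ i j, (∫ ω, (e i j ω) ^ 4) ≤ m4 := by
    intro i j
    have hID : IdentDistrib (fun ω => (e i j ω) ^ 4) (fun ω => (e 0 0 ω) ^ 4) ℙ ℙ :=
      (hident i j).comp (measurable_id.pow_const 4)
    rw [hID.integral_eq]
  -- coefficient matrices and sums
  set B : ∀ m : ℕ, Matrix (Fin m) (Fin (p m)) ℝ := fun m => Sqrt m * A m with hB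
  set cm : ℕ → ℕ × ℕ → ℝ := fun m q =>
    if h : q.1 < m ∧ q.2 < p m then B m ⟨q.1, h.1⟩ ⟨q.2, h.2⟩ else 0 with hcmdef
  set sm : ℕ → Finset (ℕ × ℕ) := fun m => (Finset.range m) ×ˢ (Finset.range (p m)) with hsmdef
  set T : ℕ → Ω → ℝ := fun m ω => ∑ q ∈ sm m, cm m q * e q.1 q.2 ω with hTdef
  have hcm : ∀ m (k : Fin m) (j : Fin (p m)), cm m (k.1, j.1) = B m k j := by
    intro m k j
    simp only [hcmdef]
    rw [dif_pos ⟨k.2, j.2⟩]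
  have hT : ∀ m ω, T m ω = ∑ k : Fin m, ∑ j : Fin (p m), B m k j * e k.1 j.1 ω := by
    intro m ω
    show (∑ q ∈ (Finset.range m) ×ˢ (Finset.range (p m)), cm m q * e q.1 q.2 ω) = _
    refine (aux_fin_sum' (fun q => cm m q * e q.1 q.2 ω)).trans ?_
    exact Finset.sum_congr rfl fun k _ => Finset.sum_congr rfl fun j _ => by
      rw [hcm m k j]
  have hT2 : ∀ m, (∑ q ∈ sm m, (cm m q) ^ 2)
      = ∑ k : Fin m, ∑ j : Fin (p m), (B m k j) ^ 2 := by
    intro m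
    show (∑ q ∈ (Finset.range m) ×ˢ (Finset.range (p m)), (cm m q) ^ 2) = _
    refine (aux_fin_sum' (fun q => (cm m q) ^ 2)).trans ?_
    exact Finset.sum_congr rfl fun k _ => Finset.sum_congr rfl fun j _ => by
      rw [hcm m k j]
  -- the moment estimates
  have MoM := fun m => aux_moment4 e hmeas hindep hint4 hmean hvar m4 hm4 (cm m) (sm m)
  -- the scalar sequence
  set g : ℕ → Ω → ℝ := fun m ω => (1 / (m * p m : ℝ)) * ((1 / Real.sqrt n) * T m ω) with hgdef
  -- identity with the goal expression
  have hkey : ∀ m ω, (1 / (m * p m : ℝ)) * (Abar m ω * (A m)ᵀ).trace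
      - (1 / (m * p m : ℝ)) * (A m * (A m)ᵀ).trace = g m ω := by
    intro m ω
    rw [hAbar m ω, Matrix.add_mul, Matrix.smul_mul, Matrix.trace_add, Matrix.trace_smul,
      smul_eq_mul]
    have htr : (Sqrt m * (Matrix.of fun i j => e i.val j.val ω
          : Matrix (Fin m) (Fin (p m)) ℝ) * (A m)ᵀ).trace = T m ω := by
      rw [aux_trace_formula (Sqrt m) (hSqrtSymm m) _ (A m), hT m ω]
      rfl
    rw [htr]
    simp only [hgdef]
    ring
  -- choose the tail index
  have hev1 : ∀ᶠ m : ℕ in atTop, c / 2 < (m : ℝ) / (p m : ℝ) :=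
    hp.eventually (eventually_gt_nhds (by linarith))
  have hev2 : ∀ᶠ m : ℕ in atTop, (m : ℝ) / (p m : ℝ) < 2 * c :=
    hp.eventually (eventually_lt_nhds (by linarith))
  obtain ⟨N0, hN0⟩ := eventually_atTop.mp (hev1.and hev2)
  set N : ℕ := max N0 1 with hNdef
  have hN1 : 1 ≤ N := le_max_right _ _
  -- per-index facts for m ≥ N
  have hfacts : ∀ m : ℕ, N ≤ m → 1 ≤ m ∧ 1 ≤ p m ∧ (m : ℝ) < 2 * c * (p m : ℝ) := by
    intro m hm
    have h1 : 1 ≤ m := le_trans hN1 hm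
    have h := hN0 m (le_trans (le_max_left _ _) hm)
    have hpm : 1 ≤ p m := by
      rw [Nat.one_le_iff_ne_zero]
      intro h0
      have h1 := h.1
      rw [h0] at h1
      norm_num at h1
      linarith
    have hpm0 : (0:ℝ) < (p m : ℝ) := by exact_mod_cast hpm
    have h2 : (m : ℝ) < 2 * c * (p m : ℝ) := by
      have := h.2
      rw [div_lt_iff₀ hpm0] at this
      linarith [this]
    exact ⟨h1, hpm, h2⟩
  -- the summable bound
  set K : ℝ := (m4 + 3) * (D1 * D2) ^ 2 * (2 * c) ^ 2 with hKdef
  have hK0 : 0 ≤ K := by positivity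
  set u : ℕ → ℝ := fun k => K * (1 / ((k : ℝ) + 1) ^ 2) with hudef
  have hu : Summable u := aux_summable.mul_left K
  -- integral bound for the shifted sequence
  set f : ℕ → Ω → ℝ := fun k ω => (g (k + N) ω) ^ 4 with hfdef
  have hTmeas : ∀ m, Measurable (T m) := fun m =>
    Finset.measurable_sum _ (fun q _ => (hmeas q.1 q.2).const_mul _)
  have hgmeas : ∀ m, Measurable (g m) := fun m => ((hTmeas m).const_mul _).const_mul _
  have hfmeas : ∀ k, Measurable (f k) := fun k => (hgmeas (k + N)).pow_const 4
  have hgrw : ∀ m, (fun ω => (g m ω) ^ 4)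
      = fun ω => ((1 / (m * p m : ℝ)) * (1 / Real.sqrt n)) ^ 4 * (T m ω) ^ 4 := by
    intro m; funext ω; simp only [hgdef]; ring
  have hfint : ∀ k, Integrable (f k) := by
    intro k
    have : f k = fun ω => ((1 / ((k + N : ℕ) * p (k + N) : ℝ)) * (1 / Real.sqrt n)) ^ 4
        * (T (k + N) ω) ^ 4 := hgrw (k + N)
    rw [this]
    exact ((MoM (k + N)).1).const_mul _
  have hf0 : ∀ k ω, 0 ≤ f k ω := fun k ω => by simp only [hfdef]; positivity
  have hbound : ∀ k, (∫ ω, f k ω) ≤ u k := by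
    intro k
    set m := k + N with hmdef
    obtain ⟨hm1, hpm1, hmlt⟩ := hfacts m (by omega)
    have ha0 : (0:ℝ) < (m : ℝ) := by exact_mod_cast hm1
    have hb0 : (0:ℝ) < (p m : ℝ) := by exact_mod_cast hpm1
    -- trace bounds
    have htrS : (Sig m).trace ≤ D1 * m := by
      have h := hC1 m
      rw [one_div, inv_mul_le_iff₀ ha0] at h
      calc (Sig m).trace ≤ (m:ℝ) * C1 := h
        _ ≤ D1 * m := by rw [mul_comm]; exact mul_le_mul_of_nonneg_right (le_max_left _ _) ha0.le
    have htrA : (A m * (A m)ᵀ).trace ≤ D2 * (m * p m) := by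
      have h := hC2 m
      have hmp0 : (0:ℝ) < (m * p m : ℝ) := by positivity
      rw [one_div, inv_mul_le_iff₀ hmp0] at h
      calc (A m * (A m)ᵀ).trace ≤ (m * p m : ℝ) * C2 := h
        _ ≤ D2 * (m * p m) := by
          rw [mul_comm]; exact mul_le_mul_of_nonneg_right (le_max_left _ _) hmp0.le
    have htrA0 : 0 ≤ (A m * (A m)ᵀ).trace := by
      rw [aux_trace_sq]
      exact Finset.sum_nonneg fun k _ => Finset.sum_nonneg fun j _ => sq_nonneg _
    -- Cauchy-Schwarz bound on coefficients
    have hcs : (∑ q ∈ sm m, (cm m q) ^ 2) ≤ (D1 * m) * (D2 * (m * p m)) := by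
      rw [hT2 m]
      calc ∑ k : Fin m, ∑ j : Fin (p m), (B m k j) ^ 2
          ≤ (Sqrt m * (Sqrt m)ᵀ).trace * (A m * (A m)ᵀ).trace := aux_cs (Sqrt m) (A m)
        _ = (Sig m).trace * (A m * (A m)ᵀ).trace := by rw [hSqrtSymm m, hSqrtSq m]
        _ ≤ (D1 * m) * (D2 * (m * p m)) := by
            refine mul_le_mul htrS htrA htrA0 ?_
            positivity
    have hcs0 : 0 ≤ (∑ q ∈ sm m, (cm m q) ^ 2) :=
      Finset.sum_nonneg fun q _ => sq_nonneg _
    have hT4 : (∫ ω, (T m ω) ^ 4) ≤ (m4 + 3) * ((D1 * m) * (D2 * (m * p m))) ^ 2 := by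
      refine le_trans ((MoM m).2.2.2) ?_
      refine mul_le_mul_of_nonneg_left ?_ (by linarith)
      exact pow_le_pow_left₀ hcs0 hcs 2
    have hT40 : 0 ≤ (∫ ω, (T m ω) ^ 4) := integral_nonneg fun ω => by positivity
    -- the scaling factor
    have hsn : (1:ℝ) ≤ Real.sqrt n := by
      rw [show (1:ℝ) = Real.sqrt 1 by rw [Real.sqrt_one]]
      exact Real.sqrt_le_sqrt (by exact_mod_cast le_trans one_le_two hn)
    have hr1 : (0:ℝ) < 1 / Real.sqrt n := by positivity
    have hrle : (1 / Real.sqrt n : ℝ) ≤ 1 := by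
      rw [div_le_one (by linarith)]; exact hsn
    have hint_eq : (∫ ω, f k ω)
        = ((1 / (m * p m : ℝ)) * (1 / Real.sqrt n)) ^ 4 * (∫ ω, (T m ω) ^ 4) := by
      have h1 : f k = fun ω => ((1 / (m * p m : ℝ)) * (1 / Real.sqrt n)) ^ 4
          * (T m ω) ^ 4 := hgrw m
      rw [h1]
      exact integral_const_mul _ _
    have hr4 : ((1 / (m * p m : ℝ)) * (1 / Real.sqrt n)) ^ 4 ≤ (1 / (m * p m : ℝ)) ^ 4 := by
      have h1 : (0:ℝ) ≤ 1 / (m * p m : ℝ) := by positivity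
      calc ((1 / (m * p m : ℝ)) * (1 / Real.sqrt n)) ^ 4
          ≤ ((1 / (m * p m : ℝ)) * 1) ^ 4 := by
            refine pow_le_pow_left₀ (by positivity) ?_ 4
            exact mul_le_mul_of_nonneg_left hrle h1
        _ = (1 / (m * p m : ℝ)) ^ 4 := by ring
    have hr40 : (0:ℝ) ≤ ((1 / (m * p m : ℝ)) * (1 / Real.sqrt n)) ^ 4 := by positivity
    have step1 : (∫ ω, f k ω)
        ≤ (1 / (m * p m : ℝ)) ^ 4 * ((m4 + 3) * ((D1 * m) * (D2 * (m * p m))) ^ 2) := by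
      rw [hint_eq]
      exact mul_le_mul hr4 hT4 hT40 (by positivity)
    have step2 : (1 / (m * p m : ℝ)) ^ 4 * ((m4 + 3) * ((D1 * m) * (D2 * (m * p m))) ^ 2)
        = (m4 + 3) * (D1 * D2) ^ 2 / ((p m : ℝ)) ^ 2 := by
      field_simp
    have hk1 : ((k : ℝ) + 1) ≤ 2 * c * (p m : ℝ) := by
      have : ((k : ℝ) + 1) ≤ (m : ℝ) := by
        rw [hmdef]; push_cast
        have : (1:ℝ) ≤ (N:ℝ) := by exact_mod_cast hN1
        linarith
      linarith
    have hk10 : (0:ℝ) < (k : ℝ) + 1 := by positivity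
    have hinvp : 1 / ((p m : ℝ)) ^ 2 ≤ (2 * c) ^ 2 * (1 / ((k : ℝ) + 1) ^ 2) := by
      have h1 : 1 / (p m : ℝ) ≤ 2 * c / ((k : ℝ) + 1) := by
        rw [div_le_div_iff₀ hb0 hk10]
        linarith
      have h2 : (1 / (p m : ℝ)) ^ 2 ≤ (2 * c / ((k : ℝ) + 1)) ^ 2 :=
        pow_le_pow_left₀ (by positivity) h1 2
      calc 1 / ((p m : ℝ)) ^ 2 = (1 / (p m : ℝ)) ^ 2 := by ring
        _ ≤ (2 * c / ((k : ℝ) + 1)) ^ 2 := h2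
        _ = (2 * c) ^ 2 * (1 / ((k : ℝ) + 1) ^ 2) := by rw [div_pow]; ring
    calc (∫ ω, f k ω) ≤ (m4 + 3) * (D1 * D2) ^ 2 / ((p m : ℝ)) ^ 2 := by
          rw [← step2]; exact step1
      _ = (m4 + 3) * (D1 * D2) ^ 2 * (1 / ((p m : ℝ)) ^ 2) := by ring
      _ ≤ (m4 + 3) * (D1 * D2) ^ 2 * ((2 * c) ^ 2 * (1 / ((k : ℝ) + 1) ^ 2)) := by
          refine mul_le_mul_of_nonneg_left hinvp (by positivity)
      _ = u k := by simp only [hudef, hKdef]; ring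
  -- conclude
  have hae := aux_bc f hfmeas hf0 hfint u hu hbound
  filter_upwards [hae] with ω hω
  have hsq1 : Tendsto (fun k => (g (k + N) ω) ^ 2) atTop (nhds 0) := by
    have h := (Real.continuous_sqrt.tendsto 0).comp hω
    have heq : (fun k => Real.sqrt (f k ω)) = fun k => (g (k + N) ω) ^ 2 := by
      funext k
      simp only [hfdef]
      rw [show (g (k + N) ω) ^ 4 = ((g (k + N) ω) ^ 2) ^ 2 by ring,
        Real.sqrt_sq (sq_nonneg _)]
    rw [show Real.sqrt 0 = 0 from Real.sqrt_zero] at h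
    rw [← heq]
    exact h
  have habs : Tendsto (fun k => |g (k + N) ω|) atTop (nhds 0) := by
    have h := (Real.continuous_sqrt.tendsto 0).comp hsq1
    have heq : (fun k => Real.sqrt ((g (k + N) ω) ^ 2)) = fun k => |g (k + N) ω| := by
      funext k; exact Real.sqrt_sq_eq_abs _
    rw [show Real.sqrt 0 = 0 from Real.sqrt_zero] at h
    rw [← heq]
    exact h
  have hgN : Tendsto (fun k => g (k + N) ω) atTop (nhds 0) := by
    have hneg : Tendsto (fun k => -|g (k + N) ω|) atTop (nhds 0) := by
      simpa using habs.neg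
    exact tendsto_of_tendsto_of_tendsto_of_le_of_le hneg habs
      (fun k => neg_abs_le _) (fun k => le_abs_self _)
  have hg : Tendsto (fun m => g m ω) atTop (nhds 0) :=
    (tendsto_add_atTop_iff_nat N).mp hgN
  have hfinal : (fun m : ℕ => (1 / (m * p m : ℝ)) * (Abar m ω * (A m)ᵀ).trace
      - (1 / (m * p m : ℝ)) * (A m * (A m)ᵀ).trace) = fun m => g m ω := by
    funext m; exact hkey m ω
  rw [hfinal]
  exact hg
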